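/- There exists a constant M such that for all m > M, all n > 2m² + 2m, all k with 1 ≤ k < m/2, and all τ with 1 ≤ τ ≤ n³/(6m), the inequality C(n+k, 2k) · C(n² + τ − 2k, τ) > k · C(m, k)² · C(n² + τ − 1, τ) holds. -/

import Mathlib

set_option maxHeartbeats 1000000

lemma ratio_bound (τ : ℕ) : ∀ d a : ℕ,
    Nat.choose (a + d + τ) τ * (a + 1) ^ d ≤
      Nat.choose (a + τ) τ * (a + d + τ + 1) ^ d := by
  intro d
  induction d with
  | zero => intro a; simp
  | succ d ih =>
    intro a
    have step : Nat.choose (a + 1 + τ) τ * (a + 1) = Nat.choose (a + τ) τ * (a + τ + 1) := by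
      have h := Nat.choose_mul_succ_eq (a + τ) τ
      have h2 : a + τ + 1 - τ = a + 1 := by omega
      rw [h2] at h
      have h3 : a + 1 + τ = a + τ + 1 := by omega
      rw [h3]
      omega
    calc Nat.choose (a + (d + 1) + τ) τ * (a + 1) ^ (d + 1)
        = (Nat.choose ((a + 1) + d + τ) τ * (a + 1) ^ d) * (a + 1) := by
          ring_nf
      _ ≤ (Nat.choose ((a + 1) + d + τ) τ * ((a + 1) + 1) ^ d) * (a + 1) := by
          gcongr <;> omega
      _ ≤ (Nat.choose ((a + 1) + τ) τ * ((a + 1) + d + τ + 1) ^ d) * (a + 1) := by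
          exact Nat.mul_le_mul_right _ (ih (a + 1))
      _ = (Nat.choose (a + τ) τ * (a + τ + 1)) * ((a + 1) + d + τ + 1) ^ d := by
          rw [← step]; ring
      _ ≤ Nat.choose (a + τ) τ * (a + (d + 1) + τ + 1) ^ (d + 1) := by
          have : (a + 1) + d + τ + 1 = a + (d + 1) + τ + 1 := by omega
          rw [this, pow_succ]
          have : a + τ + 1 ≤ a + (d + 1) + τ + 1 := by omega
          calc Nat.choose (a + τ) τ * (a + τ + 1) * (a + (d + 1) + τ + 1) ^ d
              ≤ Nat.choose (a + τ) τ * (a + (d + 1) + τ + 1) * (a + (d + 1) + τ + 1) ^ d := by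
                gcongr
            _ = _ := by ring


lemma vandermonde_sq (m k : ℕ) :
    Nat.choose m k ^ 2 ≤ Nat.choose (2 * m) (2 * k) := by
  have h := Nat.add_choose_eq m m (2 * k)
  rw [two_mul, h]
  have hmem : (k, k) ∈ Finset.HasAntidiagonal.antidiagonal (2 * k) := by
    simp [two_mul]
  calc Nat.choose m k ^ 2 = Nat.choose m (k, k).1 * Nat.choose m (k, k).2 := by ring
    _ ≤ _ := Finset.single_le_sum (f := fun ij => Nat.choose m ij.1 * Nat.choose m ij.2) (fun i _ => Nat.zero_le _) hmem

/-- **Case C4, subcase `k < m/2`.** There is a constant `M` such that for all `m > M`,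
all `n > 2m² + 2m`, all `k` with `1 ≤ k < m/2`, and all `τ` with `1 ≤ τ ≤ n³/(6m)`,
`C(n+k, 2k)·C(n²+τ−2k, τ) > k·C(m, k)²·C(n²+τ−1, τ)`. -/
theorem case_C4_small_k :
    ∃ M : ℕ, ∀ m : ℕ, m > M → ∀ n : ℕ, n > 2 * m ^ 2 + 2 * m →
      ∀ k : ℕ, 1 ≤ k → 2 * k < m →
        ∀ τ : ℕ, 1 ≤ τ → 6 * m * τ ≤ n ^ 3 →
          k * Nat.choose m k ^ 2 * Nat.choose (n ^ 2 + τ - 1) τ <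
            Nat.choose (n + k) (2 * k) * Nat.choose (n ^ 2 + τ - 2 * k) τ := by
  refine ⟨10, fun m hm n hn k hk1 hk2 τ hτ1 hτ6 => ?_⟩
  have hmn : m < n := by nlinarith
  have hN2 : 2 * k ≤ n ^ 2 := by nlinarith
  obtain ⟨N, hN⟩ : ∃ N : ℕ, N = n ^ 2 := ⟨n ^ 2, rfl⟩
  rw [← hN] at hN2 ⊢
  obtain ⟨a, ha⟩ : ∃ a : ℕ, a + 2 * k = N := ⟨N - 2 * k, by omega⟩
  obtain ⟨b, hb⟩ : ∃ b : ℕ, b + k = n + 1 := ⟨n + 1 - k, by omega⟩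
  obtain ⟨d, hd⟩ : ∃ d : ℕ, d + 1 = 2 * k := ⟨2 * k - 1, by omega⟩
  -- the ratio bound, rewritten
  have hr : Nat.choose (N + τ - 1) τ * (a + 1) ^ d ≤
      Nat.choose (N + τ - 2 * k) τ * (N + τ) ^ d := by
    have h := ratio_bound τ d a
    have e1 : a + d + τ = N + τ - 1 := by omega
    have e2 : a + τ = N + τ - 2 * k := by omega
    have e3 : a + d + τ + 1 = N + τ := by omega
    rwa [e3, e1, e2] at h
  -- key elementary inequalities
  have hii : 2 * m * k < b := by
    have h1 : m * (2 * k) ≤ m * m := Nat.mul_le_mul_left m hk2.le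
    nlinarith
  have hiii : 2 * m * (N + τ) ≤ b * (a + 1) := by
    have h1 : (b : ℤ) = (n : ℤ) + 1 - k := by omega
    have h2 : (a : ℤ) = (N : ℤ) - 2 * k := by omega
    have hNZ : (N : ℤ) = (n : ℤ) ^ 2 := by exact_mod_cast congrArg (Nat.cast : ℕ → ℤ) hN
    have h6 : 6 * (m : ℤ) * τ ≤ (n : ℤ) ^ 3 := by exact_mod_cast hτ6
    have hn' : (n : ℤ) ≥ 2 * (m : ℤ) ^ 2 + 2 * m + 1 := by exact_mod_cast hn
    have hk' : 2 * (k : ℤ) + 1 ≤ m := by exact_mod_cast hk2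
    have hk1' : 1 ≤ (k : ℤ) := by exact_mod_cast hk1
    have hm' : 11 ≤ (m : ℤ) := by exact_mod_cast hm
    have key : 2 * (m : ℤ) * ((n : ℤ) ^ 2 + τ) ≤
        ((n : ℤ) + 1 - k) * ((n : ℤ) ^ 2 - 2 * k + 1) := by
      have hτ' : (0 : ℤ) ≤ (τ : ℤ) := by positivity
      have hnn : (0 : ℤ) ≤ (n : ℤ) := by positivity
      have hmm : (0 : ℤ) ≤ (m : ℤ) := by positivity
      have h2m : 2 * (m : ℤ) ≤ n := by nlinarith [sq_nonneg (m : ℤ)]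
      have hA1 : 4 * (m:ℤ)^2*n^2 + 4*m*n^2 + 2*n^2 ≤ 2 * (n:ℤ)^3 := by
        have := mul_le_mul_of_nonneg_right hn'.le (sq_nonneg (n:ℤ))
        nlinarith [this]
      have hA2 : 10 * (m:ℤ) * n^2 ≤ 8 * m^2 * n^2 := by
        have h10 : (10:ℤ) ≤ 8 * m := by linarith
        have := mul_le_mul_of_nonneg_right h10 (by positivity : (0:ℤ) ≤ (m:ℤ) * n^2)
        nlinarith [this]
      have hA3 : 6 * (m:ℤ) * n ≤ 3 * n^2 := by
        have := mul_le_mul_of_nonneg_right h2m (by positivity : (0:ℤ) ≤ 3 * (n:ℤ))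
        nlinarith [this]
      have hnm : (m:ℤ) ≤ n := by linarith
      have hn2m : (m:ℤ) ≤ n^2 := by nlinarith
      have prod_le : ((n:ℤ) - m) * ((n:ℤ)^2 - m) ≤
          ((n:ℤ) + 1 - k) * ((n:ℤ)^2 - 2*k + 1) := by
        apply mul_le_mul (by linarith) (by linarith) (by linarith) (by linarith)
      nlinarith [prod_le, hA1, hA2, hA3, h6]
    have : (2 * m * (N + τ) : ℤ) ≤ ((b : ℤ) * (a + 1) : ℤ) := by
      rw [h1, h2, hNZ]; push_cast; linarith [key]
    exact_mod_cast this
  -- the core inequality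
  have core : k * Nat.choose m k ^ 2 * (N + τ) ^ d <
      Nat.choose (n + k) (2 * k) * (a + 1) ^ d := by
    have hfac : 0 < Nat.factorial (2 * k) := Nat.factorial_pos _
    have hvdm := vandermonde_sq m k
    have hdesc1 : Nat.factorial (2 * k) * Nat.choose (2 * m) (2 * k) ≤ (2 * m) ^ (2 * k) := by
      rw [← Nat.descFactorial_eq_factorial_mul_choose]
      exact Nat.descFactorial_le_pow _ _
    have hdesc2 : b ^ (2 * k) ≤ Nat.factorial (2 * k) * Nat.choose (n + k) (2 * k) := by
      rw [← Nat.descFactorial_eq_factorial_mul_choose]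
      have : b = n + k + 1 - 2 * k := by omega
      rw [this]
      exact Nat.pow_sub_le_descFactorial _ _
    have hmid : k * (2 * m) ^ (2 * k) * (N + τ) ^ d < b ^ (2 * k) * (a + 1) ^ d := by
      have hbpos : 0 < b := by omega
      have hpos : 0 < (b * (a + 1)) ^ d := pow_pos (by positivity) d
      calc k * (2 * m) ^ (2 * k) * (N + τ) ^ d
          = (2 * m * k) * ((2 * m) ^ d * (N + τ) ^ d) := by rw [← hd, pow_succ]; ring
        _ = (2 * m * k) * (2 * m * (N + τ)) ^ d := by rw [← mul_pow]
        _ ≤ (2 * m * k) * (b * (a + 1)) ^ d := by gcongr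
        _ < b * (b * (a + 1)) ^ d := mul_lt_mul_of_pos_right hii hpos
        _ = b * (b ^ d * (a + 1) ^ d) := by rw [mul_pow]
        _ = b ^ (2 * k) * (a + 1) ^ d := by rw [← hd, pow_succ]; ring
    have hchain : k * Nat.choose m k ^ 2 * (N + τ) ^ d * Nat.factorial (2 * k) <
        Nat.choose (n + k) (2 * k) * (a + 1) ^ d * Nat.factorial (2 * k) := by
      calc k * Nat.choose m k ^ 2 * (N + τ) ^ d * Nat.factorial (2 * k)
          = k * (Nat.factorial (2 * k) * Nat.choose m k ^ 2) * (N + τ) ^ d := by ring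
        _ ≤ k * (Nat.factorial (2 * k) * Nat.choose (2 * m) (2 * k)) * (N + τ) ^ d := by
            gcongr
        _ ≤ k * (2 * m) ^ (2 * k) * (N + τ) ^ d := by gcongr
        _ < b ^ (2 * k) * (a + 1) ^ d := hmid
        _ ≤ (Nat.factorial (2 * k) * Nat.choose (n + k) (2 * k)) * (a + 1) ^ d := by gcongr
        _ = Nat.choose (n + k) (2 * k) * (a + 1) ^ d * Nat.factorial (2 * k) := by ring
    exact Nat.lt_of_mul_lt_mul_right hchain
  -- assemble
  have hC2 : 0 < Nat.choose (N + τ - 2 * k) τ := Nat.choose_pos (by omega)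
  have hP : 0 < (a + 1) ^ d := by positivity
  have final : k * Nat.choose m k ^ 2 * Nat.choose (N + τ - 1) τ * (a + 1) ^ d <
      Nat.choose (n + k) (2 * k) * Nat.choose (N + τ - 2 * k) τ * (a + 1) ^ d := by
    calc k * Nat.choose m k ^ 2 * Nat.choose (N + τ - 1) τ * (a + 1) ^ d
        = k * Nat.choose m k ^ 2 * (Nat.choose (N + τ - 1) τ * (a + 1) ^ d) := by ring
      _ ≤ k * Nat.choose m k ^ 2 * (Nat.choose (N + τ - 2 * k) τ * (N + τ) ^ d) := by gcongr
      _ = (k * Nat.choose m k ^ 2 * (N + τ) ^ d) * Nat.choose (N + τ - 2 * k) τ := by ring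
      _ < (Nat.choose (n + k) (2 * k) * (a + 1) ^ d) * Nat.choose (N + τ - 2 * k) τ :=
          mul_lt_mul_of_pos_right core hC2
      _ = Nat.choose (n + k) (2 * k) * Nat.choose (N + τ - 2 * k) τ * (a + 1) ^ d := by ring
  exact Nat.lt_of_mul_lt_mul_right final
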